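/- Suppose A is a linear operator on real polynomials with A(1) = 0, and ν is a compactly supported probability measure such that A(y·p(y))(x) − x·A(p)(x) = ∫ (p(y)−p(x))/(y−x) ν_x(dy) for all polynomials p and all x. Then for all n ≥ 0, A(y^n)(x) = ∫ [ (y^n − x^n)/(y−x)² − n x^{n-1}/(y−x) ] ν_x(dy), where the integrand is interpreted as the polynomial ∂/∂x ((y^n − x^n)/(y − x)) in y. -/

import Mathlib

open MeasureTheory Polynomial Finset

lemma integrable_poly_eval (ν : Measure ℝ) [IsProbabilityMeasure ν]
    (h : ∃ K : Set ℝ, IsCompact K ∧ ν Kᶜ = 0) (q : Polynomial ℝ) :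
    Integrable (fun y => q.eval y) ν := by
  obtain ⟨K, hK, h0⟩ := h
  obtain ⟨C, hC⟩ := hK.exists_bound_of_continuousOn (q.continuous.continuousOn)
  refine Integrable.mono' (integrable_const C) (q.continuous.aestronglyMeasurable) ?_
  have hmem : ∀ᵐ y ∂ν, y ∈ K := by
    rw [MeasureTheory.ae_iff]
    exact h0
  filter_upwards [hmem] with y hy
  exact hC y hy

lemma key_sum (x y : ℝ) (n : ℕ) :
    x * (∑ k ∈ Finset.range (n - 1), ((n - 1 - k : ℕ) : ℝ) * y ^ k * x ^ (n - 2 - k))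
      + (∑ i ∈ Finset.range n, y ^ i * x ^ (n - 1 - i))
    = ∑ k ∈ Finset.range n, ((n - k : ℕ) : ℝ) * y ^ k * x ^ (n - 1 - k) := by
  rcases n with _ | m
  · simp
  · simp only [Nat.add_sub_cancel]
    rw [Finset.mul_sum]
    have h1 : ∀ k ∈ Finset.range m,
        x * (((m - k : ℕ) : ℝ) * y ^ k * x ^ (m + 1 - 2 - k))
          = ((m - k : ℕ) : ℝ) * y ^ k * x ^ (m - k) := by
      intro k hk
      rw [Finset.mem_range] at hk
      have h2 : m - k = (m + 1 - 2 - k) + 1 := by omega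
      rw [h2, pow_succ]
      ring
    rw [Finset.sum_congr rfl h1]
    have h3 : ∑ k ∈ Finset.range (m + 1), ((m + 1 - k : ℕ) : ℝ) * y ^ k * x ^ (m - k)
        = ∑ k ∈ Finset.range (m + 1),
            (((m - k : ℕ) : ℝ) * y ^ k * x ^ (m - k) + y ^ k * x ^ (m - k)) := by
      refine Finset.sum_congr rfl fun k hk => ?_
      rw [Finset.mem_range] at hk
      have : m + 1 - k = (m - k) + 1 := by omega
      rw [this, Nat.cast_add, Nat.cast_one]
      ring
    rw [h3, Finset.sum_add_distrib, Finset.sum_range_succ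
      (fun k => ((m - k : ℕ) : ℝ) * y ^ k * x ^ (m - k))]
    simp

lemma div_pow_sub (x : ℝ) (n : ℕ) :
    (X ^ n - C (x ^ n) : Polynomial ℝ) /ₘ (X - C x)
      = ∑ i ∈ Finset.range n, X ^ i * C x ^ (n - 1 - i) := by
  have h := geom_sum₂_mul (X : Polynomial ℝ) (C x) n
  have h2 : (X ^ n - C (x ^ n) : Polynomial ℝ)
      = (X - C x) * ∑ i ∈ Finset.range n, X ^ i * C x ^ (n - 1 - i) := by
    rw [mul_comm, h, C_pow]
  rw [h2, mul_divByMonic_cancel_left _ (monic_X_sub_C x)]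

theorem generator_from_commutator
    (ν : ℝ → Measure ℝ) (hprob : ∀ x, IsProbabilityMeasure (ν x))
    (hsupp : ∀ x, ∃ K : Set ℝ, IsCompact K ∧ ν x Kᶜ = 0)
    (A : Polynomial ℝ →ₗ[ℝ] Polynomial ℝ)
    (hA1 : A 1 = 0)
    (hcomm : ∀ (p : Polynomial ℝ) (x : ℝ),
      (A (X * p)).eval x - x * (A p).eval x
        = ∫ y, ((p - C (p.eval x)) /ₘ (X - C x)).eval y ∂(ν x)) :
    ∀ (n : ℕ) (x : ℝ),
      (A (X ^ n)).eval x
        = ∫ y, (∑ k ∈ Finset.range (n - 1),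
            ((n - 1 - k : ℕ) : ℝ) * y ^ k * x ^ (n - 2 - k)) ∂(ν x) := by
  intro n
  induction n with
  | zero =>
    intro x
    simp [hA1]
  | succ n ih =>
    intro x
    haveI := hprob x
    have h := hcomm (X ^ n) x
    rw [← pow_succ'] at h
    have heval : ((X ^ n - C ((X ^ n : Polynomial ℝ).eval x)) /ₘ (X - C x) : Polynomial ℝ)
        = ∑ i ∈ Finset.range n, X ^ i * C x ^ (n - 1 - i) := by
      rw [eval_pow, eval_X, div_pow_sub]
    rw [heval] at h
    have hAx : (A (X ^ (n + 1))).eval x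
        = x * (A (X ^ n)).eval x
          + ∫ y, (∑ i ∈ Finset.range n, X ^ i * C x ^ (n - 1 - i) : Polynomial ℝ).eval y ∂(ν x) := by
      linarith [h]
    rw [hAx, ih x]
    have hint1 : Integrable (fun y => ∑ k ∈ Finset.range (n - 1),
        ((n - 1 - k : ℕ) : ℝ) * y ^ k * x ^ (n - 2 - k)) (ν x) := by
      have := integrable_poly_eval (ν x) (hsupp x)
        (∑ k ∈ Finset.range (n - 1), (C ((n - 1 - k : ℕ) : ℝ) * X ^ k * C (x ^ (n - 2 - k))))
      simpa [eval_finset_sum] using this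
    have hint2 : Integrable (fun y =>
        (∑ i ∈ Finset.range n, X ^ i * C x ^ (n - 1 - i) : Polynomial ℝ).eval y) (ν x) :=
      integrable_poly_eval (ν x) (hsupp x) _
    rw [← integral_const_mul, ← integral_add (hint1.const_mul x) hint2]
    refine integral_congr_ae (Filter.Eventually.of_forall fun y => ?_)
    have he : (∑ i ∈ Finset.range n, X ^ i * C x ^ (n - 1 - i) : Polynomial ℝ).eval y
        = ∑ i ∈ Finset.range n, y ^ i * x ^ (n - 1 - i) := by
      simp [eval_finset_sum]
    simp only [he]
    have := key_sum x y n
    simp only [Nat.add_sub_cancel]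
    convert this using 2 <;> congr 2 <;> omega
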